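/- The monodromy element of 𝒩 satisfies ℳ = 1⊗1 + Kθ̄⊗θ + θK⊗θ̄ − ρ⊗ρ, and moreover ℳ = Δ(v⁻¹)·(v⊗v), where v := 1+ρ (central and invertible with v⁻¹ = 1−ρ). -/
import Mathlib


noncomputable section

open TensorProduct

/-- The quadratic form `q(x₀,x₁,x₂) = x₀²` on `ℝ³`. -/
def Nform : QuadraticForm ℝ (Fin 3 → ℝ) :=
  QuadraticMap.weightedSumSquares ℝ (fun i : Fin 3 => if i = 0 then (1 : ℝ) else 0)

/-- The algebra `𝒩 = ℤ/2 ⋉ Λ*ℝ²`, realized as the Clifford algebra of `Nform`. -/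
abbrev NA := CliffordAlgebra Nform

/-- The generator `K`. -/
def K : NA := CliffordAlgebra.ι Nform (Pi.single 0 1)

/-- The generator `θ`. -/
def θ : NA := CliffordAlgebra.ι Nform (Pi.single 1 1)

/-- The generator `θ̄`. -/
def θb : NA := CliffordAlgebra.ι Nform (Pi.single 2 1)

/-- `ρ := θ̄θ`. -/
def ρ : NA := θb * θ

/-- `Z := (1/2)·Σ_{i,j∈{0,1}} (−1)^{ij} K^i ⊗ K^j`. -/
def Z : NA ⊗[ℝ] NA :=
  (1 / 2 : ℝ) • ∑ i : Fin 2, ∑ j : Fin 2,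
    ((-1 : ℝ)) ^ ((i : ℕ) * (j : ℕ)) • ((K ^ (i : ℕ)) ⊗ₜ[ℝ] (K ^ (j : ℕ)))

/-- The R-matrix `R := (1⊗1 + θ⊗Kθ̄)·Z`. -/
def Rmat : NA ⊗[ℝ] NA := ((1 : NA ⊗[ℝ] NA) + θ ⊗ₜ[ℝ] (K * θb)) * Z

/-- The monodromy element `ℳ := R₂₁·R`. -/
def Mono : NA ⊗[ℝ] NA := (Algebra.TensorProduct.comm ℝ NA NA) Rmat * Rmat

lemma Nform_apply (x : Fin 3 → ℝ) : Nform x = x 0 ^ 2 := by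
  simp [Nform, QuadraticMap.weightedSumSquares_apply, Fin.sum_univ_three, sq]
lemma polar_zero (a b : Fin 3 → ℝ) (h : a 0 * b 0 = 0) : QuadraticMap.polar Nform a b = 0 := by
  simp only [QuadraticMap.polar, Nform_apply, Pi.add_apply]
  ring_nf
  nlinarith [h]
lemma anticomm (a b : Fin 3 → ℝ) (h : a 0 * b 0 = 0) :
    CliffordAlgebra.ι Nform a * CliffordAlgebra.ι Nform b
      = (-1 : ℝ) • (CliffordAlgebra.ι Nform b * CliffordAlgebra.ι Nform a) := by
  have := CliffordAlgebra.ι_mul_ι_add_swap (Q := Nform) a b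
  rw [polar_zero a b h] at this
  simp at this
  rw [neg_one_smul]
  exact eq_neg_of_add_eq_zero_left this
lemma KK : K * K = 1 := by rw [K, CliffordAlgebra.ι_sq_scalar, Nform_apply]; simp
lemma θθ : θ * θ = 0 := by rw [θ, CliffordAlgebra.ι_sq_scalar, Nform_apply]; simp
lemma θbθb : θb * θb = 0 := by rw [θb, CliffordAlgebra.ι_sq_scalar, Nform_apply]; simp
lemma θK : θ * K = (-1 : ℝ) • (K * θ) := anticomm _ _ (by simp)
lemma θbK : θb * K = (-1 : ℝ) • (K * θb) := anticomm _ _ (by simp)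
lemma θbθ : θb * θ = (-1 : ℝ) • (θ * θb) := anticomm _ _ (by simp)
lemma KK' (x : NA) : K * (K * x) = x := by rw [← mul_assoc, KK, one_mul]
lemma θθ' (x : NA) : θ * (θ * x) = 0 := by rw [← mul_assoc, θθ, zero_mul]
lemma θbθb' (x : NA) : θb * (θb * x) = 0 := by rw [← mul_assoc, θbθb, zero_mul]
lemma θK' (x : NA) : θ * (K * x) = (-1 : ℝ) • (K * (θ * x)) := by
  rw [← mul_assoc, θK, smul_mul_assoc, mul_assoc]
lemma θbK' (x : NA) : θb * (K * x) = (-1 : ℝ) • (K * (θb * x)) := by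
  rw [← mul_assoc, θbK, smul_mul_assoc, mul_assoc]
lemma θbθ' (x : NA) : θb * (θ * x) = (-1 : ℝ) • (θ * (θb * x)) := by
  rw [← mul_assoc, θbθ, smul_mul_assoc, mul_assoc]
lemma ρ_def : ρ = (-1 : ℝ) • (θ * θb) := by rw [ρ, θbθ]

lemma Z_eq : Z = (1 / 2 : ℝ) • ((1:NA) ⊗ₜ[ℝ] (1:NA)) + (1 / 2 : ℝ) • ((1:NA) ⊗ₜ[ℝ] K)
    + (1 / 2 : ℝ) • (K ⊗ₜ[ℝ] (1:NA)) + (-(1 / 2) : ℝ) • (K ⊗ₜ[ℝ] K) := by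
  simp only [Z, Fin.sum_univ_two]
  norm_num
  module

lemma part1 : Mono = 1 + (K * θb) ⊗ₜ[ℝ] θ + (θ * K) ⊗ₜ[ℝ] θb - ρ ⊗ₜ[ℝ] ρ := by
  rw [sub_eq_add_neg, ← neg_one_smul ℝ (ρ ⊗ₜ[ℝ] ρ)]
  simp only [Mono, Rmat, Z_eq, map_mul, map_add, map_one, map_smul,
    Algebra.TensorProduct.comm_tmul, ρ_def,
    mul_add, add_mul, smul_mul_assoc, mul_smul_comm,
    Algebra.TensorProduct.tmul_mul_tmul, one_mul, mul_one,
    Algebra.TensorProduct.one_def, ← smul_tmul', tmul_smul,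
    mul_assoc, KK, θθ, θbθb, θK, θbK, θbθ, KK', θθ', θbθb', θK', θbK', θbθ',
    tmul_zero, zero_tmul, smul_add, smul_smul, mul_zero, zero_mul, add_zero, zero_add,
    smul_zero]
  module

lemma ι_eq (m : Fin 3 → ℝ) :
    CliffordAlgebra.ι Nform m = m 0 • K + m 1 • θ + m 2 • θb := by
  have hm : m = m 0 • (Pi.single 0 1 : Fin 3 → ℝ) + m 1 • (Pi.single 1 1 : Fin 3 → ℝ)
      + m 2 • (Pi.single 2 1 : Fin 3 → ℝ) := by
    funext i
    fin_cases i <;> simp [Pi.single_apply]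
  rw [hm]
  simp [K, θ, θb]

lemma ρ_central (x : NA) : ρ * x = x * ρ := by
  induction x using CliffordAlgebra.induction with
  | algebraMap r => exact (Algebra.commutes r ρ).symm
  | ι m =>
      rw [ι_eq]
      simp only [mul_add, add_mul, mul_smul_comm, smul_mul_assoc, ρ_def, smul_mul_assoc,
        mul_smul_comm, mul_assoc, KK, θθ, θbθb, θK, θbK, θbθ, KK', θθ', θbθb', θK', θbK', θbθ',
        smul_smul, mul_zero, zero_mul, smul_zero, add_zero, zero_add, mul_one, one_mul]
      module
  | mul a b ha hb => rw [← mul_assoc, ha, mul_assoc, hb, ← mul_assoc]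
  | add a b ha hb => rw [mul_add, add_mul, ha, hb]

lemma ρρ : ρ * ρ = 0 := by
  simp only [ρ_def, smul_mul_assoc, mul_smul_comm, mul_assoc, θθ, θbθb, θbθ, θθ', θbθb', θbθ',
    smul_smul, mul_zero, smul_zero, zero_mul]

lemma vinv1 : ((1 : NA) + ρ) * (1 - ρ) = 1 := by
  rw [mul_sub, mul_one, add_mul, one_mul, ρρ]; abel
lemma vinv2 : ((1 : NA) - ρ) * (1 + ρ) = 1 := by
  rw [sub_mul, one_mul, mul_add, mul_one, ρρ]; abel


/-- the monodromy element of `𝒩` satisfies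
`ℳ = 1⊗1 + Kθ̄⊗θ + θK⊗θ̄ − ρ⊗ρ` and `ℳ = Δ(v⁻¹)·(v⊗v)` where `v = 1+ρ` (central,
invertible with `v⁻¹ = 1−ρ`). -/
theorem stmt7
    (Δ : NA →ₐ[ℝ] NA ⊗[ℝ] NA)
    (hΔK : Δ K = K ⊗ₜ[ℝ] K)
    (hΔθ : Δ θ = θ ⊗ₜ[ℝ] 1 + K ⊗ₜ[ℝ] θ)
    (hΔθb : Δ θb = θb ⊗ₜ[ℝ] 1 + K ⊗ₜ[ℝ] θb) :
    Mono = 1 + (K * θb) ⊗ₜ[ℝ] θ + (θ * K) ⊗ₜ[ℝ] θb - ρ ⊗ₜ[ℝ] ρ ∧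
    Mono = Δ (1 - ρ) * ((1 + ρ) ⊗ₜ[ℝ] (1 + ρ)) ∧
    (∀ x : NA, (1 + ρ) * x = x * (1 + ρ)) ∧
    (1 + ρ) * (1 - ρ) = 1 ∧ (1 - ρ) * (1 + ρ) = 1 := by
  refine ⟨part1, ?_, ?_, vinv1, vinv2⟩
  · rw [part1, sub_eq_add_neg, ← neg_one_smul ℝ (ρ ⊗ₜ[ℝ] ρ)]
    have hΔρ : Δ (1 - ρ) = 1 - (θb ⊗ₜ[ℝ] 1 + K ⊗ₜ[ℝ] θb) * (θ ⊗ₜ[ℝ] 1 + K ⊗ₜ[ℝ] θ) := by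
      rw [map_sub, map_one, ρ, map_mul, hΔθ, hΔθb]
    rw [hΔρ, sub_eq_add_neg, ← neg_one_smul ℝ ((θb ⊗ₜ[ℝ] 1 + K ⊗ₜ[ℝ] θb) * (θ ⊗ₜ[ℝ] 1 + K ⊗ₜ[ℝ] θ))]
    simp only [ρ_def,
      mul_add, add_mul, smul_mul_assoc, mul_smul_comm,
      Algebra.TensorProduct.tmul_mul_tmul, one_mul, mul_one,
      Algebra.TensorProduct.one_def, ← smul_tmul', tmul_smul,
      mul_assoc, KK, θθ, θbθb, θK, θbK, θbθ, KK', θθ', θbθb', θK', θbK', θbθ',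
      tmul_zero, zero_tmul, tmul_add, add_tmul, smul_add, smul_smul, mul_zero, zero_mul, add_zero, zero_add,
      smul_zero]
    module
  · intro x
    rw [add_mul, mul_add, one_mul, mul_one, ρ_central]
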